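/- arXiv:1506.00564 — 2 statements merged into one kernel-verified Lean document; each statement's English description precedes it below -/
import Mathlib

section
/- Let X = UΣV* be a (reduced) singular value decomposition of X with U having orthonormal columns, Σ invertible diagonal, V having orthonormal columns. If A = Y V Σ⁻¹ U* and Ã = U* A U, and if w is an eigenvector of Ã with eigenvalue λ ≠ 0, then ψ = Y V Σ⁻¹ w satisfies A ψ = λ ψ; i.e., the DMD mode ψ is an eigenvector of A with the same eigenvalue, provided ψ ≠ 0. -/
open Matrix

/-- given a reduced SVD `X = U Σ V*` with `Σ` invertible diagonal,
`A = Y V Σ⁻¹ U*`, `Ã = U* A U`, if `Ã w = λ w` with `λ ≠ 0` then the DMD mode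
`ψ = Y V Σ⁻¹ w` (assumed nonzero) satisfies `A ψ = λ ψ`. -/
theorem stmt_2 (N K K' : ℕ)
    (X Y : Matrix (Fin N) (Fin K') ℂ)
    (U : Matrix (Fin N) (Fin K) ℂ) (S : Matrix (Fin K) (Fin K) ℂ)
    (V : Matrix (Fin K') (Fin K) ℂ)
    (hU : Uᴴ * U = 1) (hV : Vᴴ * V = 1)
    (hSdiag : S.IsDiag) (hSinv : IsUnit S)
    (hX : X = U * S * Vᴴ)
    (A : Matrix (Fin N) (Fin N) ℂ) (hA : A = Y * V * S⁻¹ * Uᴴ)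
    (At : Matrix (Fin K) (Fin K) ℂ) (hAt : At = Uᴴ * A * U)
    (lam : ℂ) (hlam : lam ≠ 0)
    (w : Fin K → ℂ) (hw : At.mulVec w = lam • w)
    (ψ : Fin N → ℂ) (hψdef : ψ = (Y * V * S⁻¹).mulVec w) (hψ : ψ ≠ 0) :
    A.mulVec ψ = lam • ψ := by
  have hAt' : At = Uᴴ * (Y * V * S⁻¹) := by
    rw [hAt, hA]
    simp [Matrix.mul_assoc, hU]
  calc A.mulVec ψ
      = ((Y * V * S⁻¹) * (Uᴴ * (Y * V * S⁻¹))).mulVec w := by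
        rw [hA, hψdef, Matrix.mulVec_mulVec, Matrix.mul_assoc]
    _ = (Y * V * S⁻¹).mulVec (At.mulVec w) := by
        rw [hAt', Matrix.mulVec_mulVec, Matrix.mul_assoc]
    _ = lam • ψ := by rw [hw, Matrix.mulVec_smul, hψdef]
end

section
/- With notation as in the exact DMD algorithm (X = UΣV*, A = Y V Σ⁻¹ U*, Ã = U* A U = U* Y V Σ⁻¹), if the column space of Y is contained in the column space of X, then the nonzero eigenvalues of A coincide with the nonzero eigenvalues of Ã. -/
open Matrix

private lemma eig_swap {n k : Type*} [Fintype n] [Fintype k]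
    (B : Matrix n k ℂ) (C : Matrix k n ℂ) (μ : ℂ) (hμ : μ ≠ 0)
    (v : n → ℂ) (hv0 : v ≠ 0) (hv : (B * C).mulVec v = μ • v) :
    ∃ w : k → ℂ, w ≠ 0 ∧ (C * B).mulVec w = μ • w := by
  refine ⟨C.mulVec v, ?_, ?_⟩
  · intro h
    apply hv0
    have h2 : (B * C).mulVec v = 0 := by
      rw [← Matrix.mulVec_mulVec, h, Matrix.mulVec_zero]
    rw [hv] at h2
    simpa [hμ] using h2
  · rw [Matrix.mulVec_mulVec, Matrix.mul_assoc, ← Matrix.mulVec_mulVec, hv,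
      Matrix.mulVec_smul]

/-- with `X = U Σ V*` a reduced SVD, `A = Y V Σ⁻¹ U*`,
`Ã = U* Y V Σ⁻¹`, if the column space of `Y` is contained in the column space
of `X`, then the nonzero eigenvalues of `A` coincide with those of `Ã`. -/
theorem stmt_3 (N K K' : ℕ)
    (X Y : Matrix (Fin N) (Fin K') ℂ)
    (U : Matrix (Fin N) (Fin K) ℂ) (S : Matrix (Fin K) (Fin K) ℂ)
    (V : Matrix (Fin K') (Fin K) ℂ)
    (hU : Uᴴ * U = 1) (hV : Vᴴ * V = 1)
    (hSdiag : S.IsDiag) (hSinv : IsUnit S)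
    (hX : X = U * S * Vᴴ)
    (A : Matrix (Fin N) (Fin N) ℂ) (hA : A = Y * V * S⁻¹ * Uᴴ)
    (At : Matrix (Fin K) (Fin K) ℂ) (hAt : At = Uᴴ * Y * V * S⁻¹)
    (hcol : ∀ j : Fin K', (fun i => Y i j) ∈
      Submodule.span ℂ (Set.range fun j' : Fin K' => (fun i => X i j'))) :
    ∀ μ : ℂ, μ ≠ 0 →
      ((∃ v : Fin N → ℂ, v ≠ 0 ∧ A.mulVec v = μ • v) ↔
       (∃ w : Fin K → ℂ, w ≠ 0 ∧ At.mulVec w = μ • w)) := by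
  intro μ hμ
  have hA' : A = (Y * V * S⁻¹) * Uᴴ := hA
  have hAt' : At = Uᴴ * (Y * V * S⁻¹) := by rw [hAt, Matrix.mul_assoc, Matrix.mul_assoc, Matrix.mul_assoc]
  constructor
  · rintro ⟨v, hv0, hv⟩
    exact eig_swap _ _ μ hμ v hv0 (hA' ▸ hv) |>.imp fun w ⟨h1, h2⟩ => ⟨h1, hAt' ▸ h2⟩
  · rintro ⟨w, hw0, hw⟩
    exact eig_swap _ _ μ hμ w hw0 (hAt' ▸ hw) |>.imp fun v ⟨h1, h2⟩ => ⟨h1, hA' ▸ h2⟩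
end
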